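/- Let A_{i,j} (i, j ∈ ℕ) be a doubly indexed family of abelian groups equipped with group homomorphisms s_{i,j} : A_{i,j} → A_{i+1,j} (vertical maps) and b_{i,j} : A_{i,j} → A_{i,j+1} (horizontal maps) such that every square commutes: b_{i+1,j} ∘ s_{i,j} = s_{i,j+1} ∘ b_{i,j}. Assume: (i) for all i, j and all x ∈ A_{i,j}, if s_{i,j}(x) = 0 then b_{i,j}(x) = 0; and (ii) for all i, j and all x ∈ A_{i+1,j+1}, if x = b_{i+1,j}(y) for some y ∈ A_{i+1,j}, then x = s_{i,j+1}(z) for some z ∈ A_{i,j+1}. Then the canonical homomorphism from the direct limit of the bottom row, colim_j A_{0,j} (over the maps b_{0,j}), to the direct limit colim_{(i,j) ∈ ℕ×ℕ} A_{i,j} of the whole system (over the product order on ℕ × ℕ) is an isomorphism of abelian groups. (This is the abstract direct-limit argument used in Section 9.1 to identify lim π_{n+2k}(𝕂) with lim π^S_{n+2k}(𝕂).) -/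

import Mathlib

open CategoryTheory CategoryTheory.Limits

/-- The functor `ℕ ⥤ ℕ × ℕ`, `j ↦ (0, j)`, embedding the bottom row of a doubly indexed
direct system (here `ℕ × ℕ`, with `ℕ` the preorder category of natural numbers, is the thin
category corresponding to the componentwise product order on `ℕ × ℕ`). -/
def bottomRow : ℕ ⥤ ℕ × ℕ :=
  Functor.prod' ((Functor.const ℕ).obj (0 : ℕ)) (𝟭 ℕ)

lemma nn_hom_eq {p q : ℕ × ℕ} (f g : p ⟶ q) : f = g :=
  Prod.ext (Subsingleton.elim _ _) (Subsingleton.elim _ _)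

lemma Fmap_congr (F : ℕ × ℕ ⥤ AddCommGrpCat) {p q : ℕ × ℕ} (f g : p ⟶ q) (x : F.obj p) :
    F.map f x = F.map g x := by rw [nn_hom_eq f g]

lemma Fmap_comp (F : ℕ × ℕ ⥤ AddCommGrpCat) {p q r : ℕ × ℕ} (f : p ⟶ q) (g : q ⟶ r) (h : p ⟶ r)
    (x : F.obj p) : F.map g (F.map f x) = F.map h x := by
  rw [← CategoryTheory.comp_apply, ← F.map_comp, nn_hom_eq (f ≫ g) h]

lemma vz (F : ℕ × ℕ ⥤ AddCommGrpCat)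
    (h1 : ∀ i j : ℕ, ∀ x : F.obj (i, j),
      F.map ((homOfLE (Nat.le_succ i), homOfLE (le_refl j)) : (i, j) ⟶ (i + 1, j)) x = 0 →
      F.map ((homOfLE (le_refl i), homOfLE (Nat.le_succ j)) : (i, j) ⟶ (i, j + 1)) x = 0) :
    ∀ (n i j i' : ℕ) (hi : i' = i + n) (hle : i ≤ i') (x : F.obj (i, j)),
      F.map ((homOfLE hle, homOfLE (le_refl j)) : (i, j) ⟶ (i', j)) x = 0 →
      ∃ (j' : ℕ) (h' : j ≤ j'),
        F.map ((homOfLE (le_refl i), homOfLE h') : (i, j) ⟶ (i, j')) x = 0 := by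
  intro n
  induction n with
  | zero =>
    intro i j i' hi hle x hx
    subst hi
    refine ⟨j, le_rfl, ?_⟩
    rw [Fmap_congr F _ (𝟙 _), F.map_id] at hx ⊢
    exact hx
  | succ n ih =>
    intro i j i' hi hle x hx
    have hle' : i + 1 ≤ i' := by omega
    set y := F.map ((homOfLE (Nat.le_succ i), homOfLE (le_refl j)) : (i, j) ⟶ (i + 1, j)) x
      with hy
    have hy0 : F.map ((homOfLE hle', homOfLE (le_refl j)) : (i + 1, j) ⟶ (i', j)) y = 0 := by
      rw [hy, Fmap_comp F _ _ ((homOfLE hle, homOfLE (le_refl j)) : (i, j) ⟶ (i', j))]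
      exact hx
    obtain ⟨j', hj', hz⟩ := ih (i + 1) j i' (by omega) hle' y hy0
    set w := F.map ((homOfLE (le_refl i), homOfLE hj') : (i, j) ⟶ (i, j')) x with hw
    have hsw : F.map ((homOfLE (Nat.le_succ i), homOfLE (le_refl j')) :
        (i, j') ⟶ (i + 1, j')) w = 0 := by
      rw [hw, Fmap_comp F _ _ ((homOfLE (Nat.le_succ i), homOfLE hj') :
        (i, j) ⟶ (i + 1, j')),
        ← Fmap_comp F ((homOfLE (Nat.le_succ i), homOfLE (le_refl j)) : (i, j) ⟶ (i + 1, j))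
          ((homOfLE (le_refl (i + 1)), homOfLE hj') : (i + 1, j) ⟶ (i + 1, j'))]
      exact hz
    refine ⟨j' + 1, by omega, ?_⟩
    rw [← Fmap_comp F ((homOfLE (le_refl i), homOfLE hj') : (i, j) ⟶ (i, j'))
      ((homOfLE (le_refl i), homOfLE (Nat.le_succ j')) : (i, j') ⟶ (i, j' + 1))]
    exact h1 i j' w hsw


lemma desc (F : ℕ × ℕ ⥤ AddCommGrpCat)
    (h2 : ∀ i j : ℕ, ∀ x : F.obj (i + 1, j + 1),
      (∃ y : F.obj (i + 1, j),
        F.map ((homOfLE (le_refl (i + 1)), homOfLE (Nat.le_succ j)) :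
          (i + 1, j) ⟶ (i + 1, j + 1)) y = x) →
      ∃ z : F.obj (i, j + 1),
        F.map ((homOfLE (Nat.le_succ i), homOfLE (le_refl (j + 1))) :
          (i, j + 1) ⟶ (i + 1, j + 1)) z = x) :
    ∀ (i j : ℕ) (x : F.obj (i, j)), ∃ (k : ℕ) (z : F.obj (0, k)),
      colimit.ι F (0, k) z = colimit.ι F (i, j) x := by
  intro i
  induction i with
  | zero => exact fun j x => ⟨j, x, rfl⟩
  | succ i ih =>
    intro j x
    set x' := F.map ((homOfLE (le_refl (i + 1)), homOfLE (Nat.le_succ j)) :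
      (i + 1, j) ⟶ (i + 1, j + 1)) x with hx'
    obtain ⟨z, hz⟩ := h2 i j x' ⟨x, rfl⟩
    obtain ⟨k, w, hw⟩ := ih (j + 1) z
    refine ⟨k, w, ?_⟩
    rw [hw, ← colimit.w_apply F ((homOfLE (Nat.le_succ i), homOfLE (le_refl (j + 1))) :
      (i, j + 1) ⟶ (i + 1, j + 1)) z, hz, hx',
      colimit.w_apply]

/-- Let `F` be a doubly indexed direct system of abelian groups over `ℕ × ℕ`
(with its componentwise order), with vertical one-step maps
`s_{i,j} = F.map ((i,j) ⟶ (i+1,j))` and horizontal one-step maps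
`b_{i,j} = F.map ((i,j) ⟶ (i,j+1))`; commutativity of all squares is automatic since
`ℕ × ℕ` is a thin category.  Assume (i) `s_{i,j}(x) = 0 → b_{i,j}(x) = 0`, and
(ii) every element of `F.obj (i+1, j+1)` in the image of `b_{i+1,j}` is in the image of
`s_{i,j+1}`.  Then the canonical homomorphism from the direct limit of the bottom row
`colim_j F.obj (0, j)` to the direct limit of the whole system is an isomorphism of abelian
groups. -/
theorem statement8 (F : ℕ × ℕ ⥤ AddCommGrpCat)
    (h1 : ∀ i j : ℕ, ∀ x : F.obj (i, j),
      F.map ((homOfLE (Nat.le_succ i), homOfLE (le_refl j)) : (i, j) ⟶ (i + 1, j)) x = 0 →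
      F.map ((homOfLE (le_refl i), homOfLE (Nat.le_succ j)) : (i, j) ⟶ (i, j + 1)) x = 0)
    (h2 : ∀ i j : ℕ, ∀ x : F.obj (i + 1, j + 1),
      (∃ y : F.obj (i + 1, j),
        F.map ((homOfLE (le_refl (i + 1)), homOfLE (Nat.le_succ j)) :
          (i + 1, j) ⟶ (i + 1, j + 1)) y = x) →
      ∃ z : F.obj (i, j + 1),
        F.map ((homOfLE (Nat.le_succ i), homOfLE (le_refl (j + 1))) :
          (i, j + 1) ⟶ (i + 1, j + 1)) z = x) :
    IsIso (colimit.pre F bottomRow) := by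
  rw [ConcreteCategory.isIso_iff_bijective]
  show Function.Bijective ⇑(colimit.pre F bottomRow)
  constructor
  · intro a b hab
    rw [← sub_eq_zero, ← map_sub] at hab
    rw [← sub_eq_zero]
    set c := a - b with hc
    clear_value c
    clear hc a b
    obtain ⟨j, x, rfl⟩ := Concrete.colimit_exists_rep (bottomRow ⋙ F) c
    have h0 : colimit.ι F (0, j) x = 0 := by
      rw [← hab, ← CategoryTheory.comp_apply, colimit.ι_pre F bottomRow j]
      rfl
    change ↑(F.obj ((0 : ℕ), j)) at x
    obtain ⟨⟨i', j'⟩, f, hf⟩ : ∃ (p : ℕ × ℕ) (f : ((0 : ℕ), j) ⟶ p), F.map f x = 0 := by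
      have h0' : colimit.ι F (0, j) x = colimit.ι F (0, j) 0 := by rw [h0, map_zero]
      obtain ⟨k, f, g, hfg⟩ := (Concrete.colimit_rep_eq_iff_exists F x 0).1 h0'
      exact ⟨k, f, by rw [hfg, map_zero]⟩
    obtain ⟨f1, f2⟩ := f
    have hj' : j ≤ j' := leOfHom f2
    set y := F.map ((homOfLE (le_refl 0), homOfLE hj') : ((0 : ℕ), j) ⟶ (0, j')) x with hy
    have hy0 : F.map ((homOfLE (Nat.zero_le i'), homOfLE (le_refl j')) :
        ((0 : ℕ), j') ⟶ (i', j')) y = 0 := by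
      rw [hy, Fmap_comp F _ _ ((f1, f2) : ((0 : ℕ), j) ⟶ (i', j'))]
      exact hf
    obtain ⟨j'', hj'', hz⟩ := vz F h1 i' 0 j' i' (by omega) (Nat.zero_le i') y hy0
    have hzz : F.map ((homOfLE (le_refl 0), homOfLE (hj'.trans hj'')) :
        ((0 : ℕ), j) ⟶ (0, j'')) x = 0 := by
      rw [← Fmap_comp F ((homOfLE (le_refl 0), homOfLE hj') : ((0 : ℕ), j) ⟶ (0, j'))
        ((homOfLE (le_refl 0), homOfLE hj'') : ((0 : ℕ), j') ⟶ (0, j''))]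
      exact hz
    rw [← colimit.w_apply (bottomRow ⋙ F) (homOfLE (hj'.trans hj'') : j ⟶ j'') x]
    have : (bottomRow ⋙ F).map (homOfLE (hj'.trans hj'') : j ⟶ j'') x =
        F.map ((homOfLE (le_refl 0), homOfLE (hj'.trans hj'')) : ((0 : ℕ), j) ⟶ (0, j'')) x :=
      Fmap_congr F _ _ x
    rw [this, hzz]
    exact map_zero _
  · intro c
    obtain ⟨⟨i, j⟩, x, rfl⟩ := Concrete.colimit_exists_rep F c
    obtain ⟨k, z, hz⟩ := desc F h2 i j x
    refine ⟨colimit.ι (bottomRow ⋙ F) k z, ?_⟩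
    exact (ConcreteCategory.congr_hom (colimit.ι_pre F bottomRow k) z).trans hz
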